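/- Let $\mathcal{O}$ be the imaginary quadratic order of discriminant $D = c^2 D_K$ (with $D_K$ a fundamental discriminant and $c$ the conductor), written as $\mathcal{O} = \mathbb{Z}[\alpha]$ where $\alpha$ has minimal polynomial $P_{\mathcal{O}}$. Let $p$ be a prime dividing $c$ and $k \geq 1$. Then the map $\lambda \mapsto (p^k, \lambda - \alpha)$ gives a bijection between residues $\lambda$ modulo $p^k$ satisfying $P_{\mathcal{O}}(\lambda) \equiv 0 \pmod{p^k}$ but $P_{\mathcal{O}}(\lambda) \not\equiv 0 \pmod{p^{k+1}}$, and invertible ideals $I$ of $\mathcal{O}$ with $\mathcal{O}/I$ cyclic of order $p^k$. -/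

import Mathlib

open Polynomial

/-- A fundamental (quadratic) discriminant. -/
def IsFundamentalDiscriminant (d : ℤ) : Prop :=
  (d % 4 = 1 ∧ Squarefree d) ∨
    (d % 4 = 0 ∧ Squarefree (d / 4) ∧ ((d / 4) % 4 = 2 ∨ (d / 4) % 4 = 3))

/-- The minimal polynomial `P_𝒪` of the canonical generator `α_𝒪` of the quadratic order of
discriminant `D = c²·D_K`: it is `X² - D/4` if `4 ∣ D_K`, and
`X² - cX + c²(1 - D_K)/4` otherwise. -/
noncomputable def ordPoly (DK : ℤ) (c : ℕ) : Polynomial ℤ :=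
  if 4 ∣ DK then X ^ 2 - C ((c : ℤ) ^ 2 * (DK / 4))
  else X ^ 2 - C (c : ℤ) * X + C ((c : ℤ) ^ 2 * ((1 - DK) / 4))

/-- The quadratic order `𝒪 = ℤ[α_𝒪]` of discriminant `c²·D_K`. -/
noncomputable abbrev QuadOrder (DK : ℤ) (c : ℕ) := AdjoinRoot (ordPoly DK c)


namespace QuadAux

variable {q : ℤ[X]} {t n : ℤ}

theorem q_monic (hq : q = X^2 - C t * X + C n) : q.Monic := by
  subst hq; monicity!

theorem q_degree (hq : q = X^2 - C t * X + C n) : q.degree = 2 := by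
  subst hq; compute_degree!

theorem q_natDegree (hq : q = X^2 - C t * X + C n) : q.natDegree = 2 := by
  subst hq; compute_degree!

theorem root_sq (hq : q = X^2 - C t * X + C n) :
    (AdjoinRoot.root q)^2 = (t : AdjoinRoot q) * AdjoinRoot.root q - (n : AdjoinRoot q) := by
  subst hq
  have h := AdjoinRoot.eval₂_root (X^2 - C t * X + C n)
  simp only [eval₂_add, eval₂_sub, eval₂_mul, eval₂_pow, eval₂_X, eval₂_C] at h
  rw [eq_intCast (AdjoinRoot.of (X^2 - C t * X + C n)) t,
    eq_intCast (AdjoinRoot.of (X^2 - C t * X + C n)) n] at h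
  linear_combination h

theorem mk_linear (hq : q = X^2 - C t * X + C n) (a b : ℤ) :
    AdjoinRoot.mk q (C a + C b * X) = (a : AdjoinRoot q) + (b : AdjoinRoot q) * AdjoinRoot.root q := by
  rw [map_add, map_mul, AdjoinRoot.mk_C, AdjoinRoot.mk_C, AdjoinRoot.mk_X,
    eq_intCast (AdjoinRoot.of q) a, eq_intCast (AdjoinRoot.of q) b]

theorem exists_repr (hq : q = X^2 - C t * X + C n) (z : AdjoinRoot q) :
    ∃ a b : ℤ, z = (a : AdjoinRoot q) + (b : AdjoinRoot q) * AdjoinRoot.root q := by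
  obtain ⟨f, rfl⟩ := AdjoinRoot.mk_surjective z
  refine ⟨(f %ₘ q).coeff 0, (f %ₘ q).coeff 1, ?_⟩
  have hmod : AdjoinRoot.mk q f = AdjoinRoot.mk q (f %ₘ q) := by
    rw [AdjoinRoot.mk_eq_mk]
    exact ⟨f /ₘ q, by have := modByMonic_add_div f q; linear_combination -this⟩
  have hq1 : q ≠ 1 := by
    intro h; have := q_natDegree hq; rw [h] at this; simp at this
  have hdeg : (f %ₘ q).natDegree ≤ 1 := by
    have h2 := natDegree_modByMonic_lt f (q_monic hq) hq1
    rw [q_natDegree hq] at h2; omega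
  have hrepr := Polynomial.eq_X_add_C_of_natDegree_le_one hdeg
  rw [hmod]
  nth_rewrite 1 [hrepr]
  rw [show C ((f %ₘ q).coeff 1) * X + C ((f %ₘ q).coeff 0)
      = C ((f %ₘ q).coeff 0) + C ((f %ₘ q).coeff 1) * X by ring, mk_linear hq]

theorem repr_eq_zero (hq : q = X^2 - C t * X + C n) {a b : ℤ}
    (h : (a : AdjoinRoot q) + (b : AdjoinRoot q) * AdjoinRoot.root q = 0) : a = 0 ∧ b = 0 := by
  rw [← mk_linear hq, AdjoinRoot.mk_eq_zero] at h
  have h0 : C a + C b * X = 0 := by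
    refine Polynomial.eq_zero_of_dvd_of_degree_lt h ?_
    rw [q_degree hq]
    refine lt_of_le_of_lt ?_ (by norm_num : (1 : WithBot ℕ) < 2)
    compute_degree
  constructor
  · have := congrArg (fun g => coeff g 0) h0
    simpa [coeff_add, coeff_C_mul, coeff_C, coeff_X] using this
  · have := congrArg (fun g => coeff g 1) h0
    simp only [coeff_add, coeff_C_mul, coeff_C, coeff_X, coeff_zero] at this
    simpa using this

theorem intCast_injective' (hq : q = X^2 - C t * X + C n) {m : ℤ}
    (h : (m : AdjoinRoot q) = 0) : m = 0 := by
  have := repr_eq_zero hq (a := m) (b := 0) (by simpa using h)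
  exact this.1

theorem intCast_mem_nonZeroDivisors (hq : q = X^2 - C t * X + C n) {m : ℤ} (hm : m ≠ 0) :
    (m : AdjoinRoot q) ∈ nonZeroDivisors (AdjoinRoot q) := by
  rw [mem_nonZeroDivisors_iff_right]
  intro z hz
  obtain ⟨a, b, rfl⟩ := exists_repr hq z
  have : ((m*a : ℤ) : AdjoinRoot q) + ((m*b : ℤ) : AdjoinRoot q) * AdjoinRoot.root q = 0 := by
    push_cast; linear_combination hz
  obtain ⟨h1, h2⟩ := repr_eq_zero hq this
  have ha : a = 0 := (mul_eq_zero.mp h1).resolve_left hm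
  have hb : b = 0 := (mul_eq_zero.mp h2).resolve_left hm
  rw [ha, hb]; push_cast; ring

section Psi

variable (q) (M : ℕ) (lam : ℤ)

/-- The ideal `(M, λ - α)`. -/
noncomputable def Jideal : Ideal (AdjoinRoot q) :=
  Ideal.span {(M : AdjoinRoot q), (lam : AdjoinRoot q) - AdjoinRoot.root q}

variable (hd : (M : ℤ) ∣ q.eval lam)

/-- The ring hom `ℤ[α] → ZMod M` sending `α ↦ λ`. -/
noncomputable def psi : AdjoinRoot q →+* ZMod M :=
  AdjoinRoot.lift (Int.castRingHom (ZMod M)) (lam : ZMod M) (by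
    have h1 : ((lam : ℤ) : ZMod M) = Int.castRingHom (ZMod M) lam := rfl
    rw [h1, Polynomial.eval₂_at_apply]
    exact (ZMod.intCast_zmod_eq_zero_iff_dvd _ M).mpr hd)

@[simp] theorem psi_root : psi q M lam hd (AdjoinRoot.root q) = (lam : ZMod M) :=
  AdjoinRoot.lift_root _

@[simp] theorem psi_intCast (m : ℤ) : psi q M lam hd ((m : ℤ) : AdjoinRoot q) = (m : ZMod M) :=
  map_intCast _ m

theorem psi_surjective : Function.Surjective (psi q M lam hd) := by
  intro x
  obtain ⟨m, rfl⟩ := ZMod.intCast_surjective x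
  exact ⟨(m : AdjoinRoot q), psi_intCast q M lam hd m⟩

theorem ker_psi (hq : q = X^2 - C t * X + C n) :
    RingHom.ker (psi q M lam hd) = Jideal q M lam := by
  apply le_antisymm
  · intro z hz
    obtain ⟨a, b, rfl⟩ := exists_repr hq z
    rw [RingHom.mem_ker] at hz
    have hz' : ((a + b * lam : ℤ) : ZMod M) = 0 := by
      push_cast
      simpa using hz
    obtain ⟨m, hm⟩ := (ZMod.intCast_zmod_eq_zero_iff_dvd _ M).mp hz'
    have hsplit : (a : AdjoinRoot q) + (b : AdjoinRoot q) * AdjoinRoot.root q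
        = ((m : ℤ) : AdjoinRoot q) * (M : AdjoinRoot q)
          - (b : AdjoinRoot q) * ((lam : AdjoinRoot q) - AdjoinRoot.root q) := by
      have : ((a + b * lam : ℤ) : AdjoinRoot q) = ((M * m : ℤ) : AdjoinRoot q) := by
        exact_mod_cast congrArg (fun x : ℤ => ((x : ℤ) : AdjoinRoot q)) hm
      push_cast at this ⊢
      linear_combination this
    rw [hsplit]
    exact Ideal.sub_mem _
      (Ideal.mul_mem_left _ _ (Ideal.subset_span (by simp)))
      (Ideal.mul_mem_left _ _ (Ideal.subset_span (by simp)))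
  · rw [Jideal, Ideal.span_le]
    rintro x (rfl | rfl)
    · simp [RingHom.mem_ker, map_natCast]
    · simp [RingHom.mem_ker]

/-- `ℤ[α]/(M, λ-α) ≃+* ZMod M`. -/
noncomputable def quotEquiv (hq : q = X^2 - C t * X + C n) :
    (AdjoinRoot q ⧸ Jideal q M lam) ≃+* ZMod M :=
  (Ideal.quotEquivOfEq (ker_psi q M lam hd hq).symm).trans
    (RingHom.quotientKerEquivOfSurjective (psi_surjective q M lam hd))

include hd in
theorem card_quot (hq : q = X^2 - C t * X + C n) :
    Nat.card (AdjoinRoot q ⧸ Jideal q M lam) = M := by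
  rw [Nat.card_congr (quotEquiv q M lam hd hq).toEquiv, Nat.card_zmod]

include hd in
theorem isAddCyclic_quot (hq : q = X^2 - C t * X + C n) :
    IsAddCyclic (AdjoinRoot q ⧸ Jideal q M lam) := by
  have e := (quotEquiv q M lam hd hq).symm
  exact isAddCyclic_of_surjective e.toAddMonoidHom e.surjective

end Psi

section Mul

variable {q : ℤ[X]} {t n : ℤ}

theorem eval_eq (hq : q = X^2 - C t * X + C n) (lam : ℤ) :
    q.eval lam = lam^2 - t*lam + n := by
  subst hq; simp

theorem conj_prod (hq : q = X^2 - C t * X + C n) (lam : ℤ) :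
    ((lam : AdjoinRoot q) - AdjoinRoot.root q)
      * (((lam : AdjoinRoot q) - (t : AdjoinRoot q)) + AdjoinRoot.root q)
    = ((q.eval lam : ℤ) : AdjoinRoot q) := by
  have h := root_sq hq
  have he : ((q.eval lam : ℤ) : AdjoinRoot q) = ((lam^2 - t*lam + n : ℤ) : AdjoinRoot q) := by
    rw [eval_eq hq]
  rw [he]
  push_cast
  linear_combination -h

theorem span_mul_conj (hq : q = X^2 - C t * X + C n) (M : ℕ) (lam : ℤ)
    (hbez : ∃ a b : ℤ, a * (M:ℤ)^2 + b * q.eval lam = M)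
    (hd : (M : ℤ) ∣ q.eval lam) :
    Jideal q M lam * Ideal.span {(M : AdjoinRoot q),
        ((lam : AdjoinRoot q) - (t : AdjoinRoot q)) + AdjoinRoot.root q}
      = Ideal.span {(M : AdjoinRoot q)} := by
  rw [Jideal, Ideal.span_pair_mul_span_pair]
  apply le_antisymm
  · rw [Ideal.span_le]
    rintro x (rfl | rfl | rfl | rfl) <;> rw [SetLike.mem_coe, Ideal.mem_span_singleton]
    · exact dvd_mul_right _ _
    · exact dvd_mul_right _ _
    · exact dvd_mul_left _ _
    · rw [conj_prod hq]
      obtain ⟨u, hu⟩ := hd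
      refine ⟨(u : AdjoinRoot q), ?_⟩
      rw [hu]; push_cast; ring
  · rw [Ideal.span_le, Set.singleton_subset_iff]
    obtain ⟨a, b, hab⟩ := hbez
    have hM : (M : AdjoinRoot q)
        = (a : AdjoinRoot q) * ((M : AdjoinRoot q) * (M : AdjoinRoot q))
          + (b : AdjoinRoot q) * (((lam : AdjoinRoot q) - AdjoinRoot.root q)
            * (((lam : AdjoinRoot q) - (t : AdjoinRoot q)) + AdjoinRoot.root q)) := by
      rw [conj_prod hq]
      have : ((a * (M:ℤ)^2 + b * q.eval lam : ℤ) : AdjoinRoot q) = ((M : ℤ) : AdjoinRoot q) :=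
        congrArg _ hab
      push_cast at this ⊢
      linear_combination -this
    have hmem : (a : AdjoinRoot q) * ((M : AdjoinRoot q) * (M : AdjoinRoot q))
          + (b : AdjoinRoot q) * (((lam : AdjoinRoot q) - AdjoinRoot.root q)
            * (((lam : AdjoinRoot q) - (t : AdjoinRoot q)) + AdjoinRoot.root q))
        ∈ Ideal.span {(M : AdjoinRoot q) * (M : AdjoinRoot q),
            (M : AdjoinRoot q) * (((lam : AdjoinRoot q) - (t : AdjoinRoot q)) + AdjoinRoot.root q),
            ((lam : AdjoinRoot q) - AdjoinRoot.root q) * (M : AdjoinRoot q),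
            ((lam : AdjoinRoot q) - AdjoinRoot.root q)
              * (((lam : AdjoinRoot q) - (t : AdjoinRoot q)) + AdjoinRoot.root q)} := by
      refine Ideal.add_mem _ (Ideal.mul_mem_left _ _ ?_) (Ideal.mul_mem_left _ _ ?_)
      · exact Ideal.subset_span (by simp)
      · apply Ideal.subset_span; simp
    rw [SetLike.mem_coe]
    rwa [← hM] at hmem

end Mul

section Frac

variable {q : ℤ[X]} {t n : ℤ}

theorem natCast_eq_intCast' (M : ℕ) : ((M : ℕ) : AdjoinRoot q) = ((M : ℤ) : AdjoinRoot q) := by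
  push_cast; rfl

theorem isUnit_Jideal (hq : q = X^2 - C t * X + C n) (M : ℕ) (lam : ℤ)
    (hd : (M : ℤ) ∣ q.eval lam)
    (hbez : ∃ a b : ℤ, a * (M:ℤ)^2 + b * q.eval lam = M) (hM0 : M ≠ 0) :
    IsUnit ((Jideal q M lam : Ideal (AdjoinRoot q)) :
      FractionalIdeal (nonZeroDivisors (AdjoinRoot q)) (FractionRing (AdjoinRoot q))) := by
  set K := FractionRing (AdjoinRoot q)
  have hmul := span_mul_conj hq M lam hbez hd
  have hco : ((Jideal q M lam : Ideal (AdjoinRoot q)) :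
        FractionalIdeal (nonZeroDivisors (AdjoinRoot q)) K)
      * ((Ideal.span {(M : AdjoinRoot q),
          ((lam : AdjoinRoot q) - (t : AdjoinRoot q)) + AdjoinRoot.root q} :
            Ideal (AdjoinRoot q)) : FractionalIdeal (nonZeroDivisors (AdjoinRoot q)) K)
      = ((Ideal.span {(M : AdjoinRoot q)} : Ideal (AdjoinRoot q)) :
          FractionalIdeal (nonZeroDivisors (AdjoinRoot q)) K) := by
    rw [← FractionalIdeal.coeIdeal_mul, hmul]
  have hmem : (M : AdjoinRoot q) ∈ nonZeroDivisors (AdjoinRoot q) := by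
    rw [natCast_eq_intCast']
    exact intCast_mem_nonZeroDivisors hq (by exact_mod_cast hM0)
  have hMu : IsUnit (algebraMap (AdjoinRoot q) K ((M : ℕ) : AdjoinRoot q)) :=
    IsLocalization.map_units K ⟨(M : AdjoinRoot q), hmem⟩
  rw [FractionalIdeal.coeIdeal_span_singleton] at hco
  have hsu : IsUnit (FractionalIdeal.spanSingleton (nonZeroDivisors (AdjoinRoot q))
      (algebraMap (AdjoinRoot q) K ((M : ℕ) : AdjoinRoot q))) := by
    refine IsUnit.of_mul_eq_one
      (FractionalIdeal.spanSingleton (nonZeroDivisors (AdjoinRoot q)) (↑hMu.unit⁻¹)) ?_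
    rw [FractionalIdeal.spanSingleton_mul_spanSingleton, hMu.mul_val_inv,
      FractionalIdeal.spanSingleton_one]
  rw [← hco] at hsu
  exact isUnit_of_mul_isUnit_left hsu

end Frac

section NotUnit

variable {q : ℤ[X]} {t n : ℤ}

set_option maxHeartbeats 1000000 in
theorem not_dvd_succ_of_isUnit (hq : q = X^2 - C t * X + C n) (p k : ℕ) (hp : p.Prime)
    (hk : 1 ≤ k) (lam : ℤ) (hpt : (p:ℤ) ∣ t) (hpn : (p:ℤ)^2 ∣ n)
    (hev : (p:ℤ)^k ∣ q.eval lam)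
    (hunit : IsUnit ((Jideal q (p^k) lam : Ideal (AdjoinRoot q)) :
      FractionalIdeal (nonZeroDivisors (AdjoinRoot q)) (FractionRing (AdjoinRoot q)))) :
    ¬ (p:ℤ)^(k+1) ∣ q.eval lam := by
  intro hdvd
  set R := AdjoinRoot q with hR
  set K := FractionRing (AdjoinRoot q) with hK
  have hp0 : (p:ℤ) ≠ 0 := by exact_mod_cast hp.ne_zero
  have hpeval : (p:ℤ) ∣ q.eval lam := dvd_trans (dvd_pow_self _ (by omega : k ≠ 0)) hev
  have hpn' : (p:ℤ) ∣ n := dvd_trans (dvd_pow_self _ (by omega : (2:ℕ) ≠ 0)) hpn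
  have hplam : (p:ℤ) ∣ lam := by
    have hsq : (p:ℤ) ∣ lam^2 := by
      have : lam^2 = q.eval lam + t*lam - n := by rw [eval_eq hq]; ring
      rw [this]
      exact dvd_sub (dvd_add hpeval (Dvd.dvd.mul_right hpt lam)) hpn'
    exact (Nat.prime_iff_prime_int.mp hp).dvd_of_dvd_pow hsq
  obtain ⟨x, hx⟩ : ∃ x, lam^2 - n = (p:ℤ) * x :=
    dvd_sub (dvd_pow hplam two_ne_zero) hpn'
  obtain ⟨y, hy⟩ : ∃ y, 2*lam - t = (p:ℤ) * y := dvd_sub (hplam.mul_left 2) hpt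
  -- the element w with p * w = (lam - root)^2
  set w : R := ((x : ℤ) : R) - ((y : ℤ) : R) * AdjoinRoot.root q with hwdef
  have hsqroot := root_sq hq
  have hx' : ((lam : R))^2 - ((n : ℤ) : R) = ((p:ℕ) : R) * ((x : ℤ) : R) := by
    have := congrArg (fun z : ℤ => ((z : ℤ) : R)) hx
    push_cast at this ⊢
    rw [Int.cast_mul, Int.cast_natCast] at this
    linear_combination this
  have hy' : 2*((lam : R)) - ((t : ℤ) : R) = ((p:ℕ) : R) * ((y : ℤ) : R) := by
    have := congrArg (fun z : ℤ => ((z : ℤ) : AdjoinRoot q)) hy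
    push_cast at this ⊢
    linear_combination this
  have hw : ((p:ℕ) : R) * w = ((lam : R) - AdjoinRoot.root q)^2 := by
    rw [hwdef]
    linear_combination -hx' + AdjoinRoot.root q * hy' - hsqroot
  -- w lies in the ideal J
  have hdM : ((p^k : ℕ) : ℤ) ∣ q.eval lam := by push_cast; exact hev
  have hxy : (p:ℤ)^k ∣ x - y*lam := by
    obtain ⟨d, hd2⟩ := hdvd
    refine ⟨-d, ?_⟩
    apply mul_left_cancel₀ hp0
    have : (p:ℤ) * (x - y*lam) = -(q.eval lam) := by
      rw [eval_eq hq]; linear_combination -hx + lam * hy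
    rw [this, hd2]; ring
  have hwJ : w ∈ Jideal q (p^k) lam := by
    rw [← ker_psi q (p^k) lam hdM hq, RingHom.mem_ker]
    have : psi q (p^k) lam hdM w = (((x - y*lam : ℤ)) : ZMod (p^k)) := by
      rw [hwdef]
      push_cast
      simp [psi_root]
    rw [this, ZMod.intCast_zmod_eq_zero_iff_dvd]
    exact_mod_cast hxy
  -- the fraction β = (lam - root)/p
  have hprmem : ((p:ℕ) : R) ∈ nonZeroDivisors R := by
    rw [natCast_eq_intCast']
    exact intCast_mem_nonZeroDivisors hq hp0
  have hpu : IsUnit (algebraMap R K (((p:ℕ)) : R)) :=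
    IsLocalization.map_units K ⟨((p:ℕ) : R), hprmem⟩
  set β : K := (↑hpu.unit⁻¹ : K) * algebraMap R K ((lam : R) - AdjoinRoot.root q) with hβ
  have hinv : (↑hpu.unit⁻¹ : K) * algebraMap R K (((p:ℕ)) : R) = 1 := hpu.val_inv_mul
  have hpk : ((p^k : ℕ) : R) = ((p:ℕ) : R) * ((p^(k-1) : ℕ) : R) := by
    push_cast
    rw [← pow_succ']
    congr 1
    omega
  have hclaim1 : β * algebraMap R K (((p^k : ℕ)) : R)
      = algebraMap R K (((p^(k-1) : ℕ) : R) * ((lam : R) - AdjoinRoot.root q)) := by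
    rw [hβ, hpk, map_mul, map_mul]
    ring_nf
    letI : CommRing K := inferInstanceAs (CommRing (FractionRing (AdjoinRoot q)))
    linear_combination (algebraMap R K ((lam : R) - AdjoinRoot.root q)
      * algebraMap R K (((p^(k-1) : ℕ)) : R)) * hinv
  have hw' : algebraMap R K (((p:ℕ)) : R) * algebraMap R K w
      = (algebraMap R K ((lam : R) - AdjoinRoot.root q))^2 := by
    rw [← map_mul, ← map_pow, hw]
  have hclaim2 : β * algebraMap R K ((lam : R) - AdjoinRoot.root q)
      = algebraMap R K w := by
    rw [hβ]
    letI : CommRing K := inferInstanceAs (CommRing (FractionRing (AdjoinRoot q)))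
    linear_combination -(↑hpu.unit⁻¹ : K) * hw' + algebraMap R K w * hinv
  have hstep : ∀ z ∈ Jideal q (p^k) lam,
      ∃ u' ∈ Jideal q (p^k) lam, β * algebraMap R K z = algebraMap R K u' := by
    intro z hz
    rw [Jideal, Ideal.mem_span_pair] at hz
    obtain ⟨r, s, hrs⟩ := hz
    refine ⟨r * (((p^(k-1) : ℕ) : R) * ((lam : R) - AdjoinRoot.root q)) + s * w, ?_, ?_⟩
    · refine Ideal.add_mem _ ?_ (Ideal.mul_mem_left _ _ hwJ)
      exact Ideal.mul_mem_left _ _ (Ideal.mul_mem_left _ _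
        (Ideal.subset_span (by simp)))
    · rw [← hrs]
      have hclaim1' := hclaim1
      rw [map_mul] at hclaim1'
      simp only [map_add, map_mul]
      linear_combination algebraMap R K r * hclaim1' + algebraMap R K s * hclaim2
  -- β stabilizes the fractional ideal ↑J
  have hle : FractionalIdeal.spanSingleton (nonZeroDivisors R) β
        * ((Jideal q (p^k) lam : Ideal R) : FractionalIdeal (nonZeroDivisors R) K)
      ≤ ((Jideal q (p^k) lam : Ideal R) : FractionalIdeal (nonZeroDivisors R) K) := by
    rw [FractionalIdeal.mul_le]
    intro i hi j hj
    rw [FractionalIdeal.mem_spanSingleton] at hi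
    obtain ⟨z, rfl⟩ := hi
    rw [FractionalIdeal.mem_coeIdeal] at hj
    obtain ⟨yy, hyyJ, rfl⟩ := hj
    obtain ⟨u', hu'J, hu'⟩ := hstep yy hyyJ
    rw [smul_mul_assoc, hu']
    have hmem' : algebraMap R K u' ∈ ((Jideal q (p^k) lam : Ideal R) :
        FractionalIdeal (nonZeroDivisors R) K) :=
      FractionalIdeal.mem_coeIdeal_of_mem _ hu'J
    rw [← FractionalIdeal.mem_coe]
    exact Submodule.smul_mem _ z (FractionalIdeal.mem_coe.mpr hmem')
  -- invertibility forces β integral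
  have hFG : ((Jideal q (p^k) lam : Ideal R) : FractionalIdeal (nonZeroDivisors R) K)
      * (↑hunit.unit⁻¹ : FractionalIdeal (nonZeroDivisors R) K) = 1 := hunit.mul_val_inv
  have hβone : FractionalIdeal.spanSingleton (nonZeroDivisors R) β ≤ 1 := by
    calc FractionalIdeal.spanSingleton (nonZeroDivisors R) β
        = FractionalIdeal.spanSingleton (nonZeroDivisors R) β
          * (((Jideal q (p^k) lam : Ideal R) : FractionalIdeal (nonZeroDivisors R) K)
            * (↑hunit.unit⁻¹ : FractionalIdeal (nonZeroDivisors R) K)) := by rw [hFG, mul_one]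
      _ = (FractionalIdeal.spanSingleton (nonZeroDivisors R) β
          * ((Jideal q (p^k) lam : Ideal R) : FractionalIdeal (nonZeroDivisors R) K))
            * (↑hunit.unit⁻¹ : FractionalIdeal (nonZeroDivisors R) K) := by rw [mul_assoc]
      _ ≤ ((Jideal q (p^k) lam : Ideal R) : FractionalIdeal (nonZeroDivisors R) K)
            * (↑hunit.unit⁻¹ : FractionalIdeal (nonZeroDivisors R) K) :=
          FractionalIdeal.mul_le.mpr (fun i hi j hj =>
            FractionalIdeal.mul_mem_mul (hle hi) hj)
      _ = 1 := hFG
  have hβmem : β ∈ (1 : FractionalIdeal (nonZeroDivisors R) K) :=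
    hβone (FractionalIdeal.mem_spanSingleton_self _ _)
  obtain ⟨rr, hrr⟩ := (FractionalIdeal.mem_one_iff _).mp hβmem
  -- so lam - root = p * rr in R
  have halg : algebraMap R K ((lam : R) - AdjoinRoot.root q)
      = algebraMap R K (((p:ℕ) : R) * rr) := by
    have h1 : algebraMap R K (((p:ℕ)) : R) * β
        = algebraMap R K ((lam : R) - AdjoinRoot.root q) := by
      rw [hβ, ← mul_assoc, mul_comm (algebraMap R K (((p:ℕ)) : R)) (↑hpu.unit⁻¹ : K),
        hinv, one_mul]
    rw [map_mul, ← h1, hrr]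
  have heq : (lam : R) - AdjoinRoot.root q = ((p:ℕ) : R) * rr :=
    IsLocalization.injective K (le_refl (nonZeroDivisors R)) halg
  obtain ⟨a, b, hab⟩ := exists_repr hq rr
  have hzero : (((p:ℤ)*a - lam : ℤ) : R) + (((p:ℤ)*b + 1 : ℤ) : R) * AdjoinRoot.root q = 0 := by
    rw [hab] at heq
    show (((p:ℤ)*a - lam : ℤ) : AdjoinRoot q) + (((p:ℤ)*b + 1 : ℤ) : AdjoinRoot q) * AdjoinRoot.root q = 0
    push_cast
    linear_combination -heq
  obtain ⟨h1, h2⟩ := repr_eq_zero hq hzero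
  have hge : (p:ℤ) ≥ 2 := by exact_mod_cast hp.two_le
  have hdvd1 : (p:ℤ) ∣ 1 := ⟨-b, by linarith⟩
  have := Int.le_of_dvd one_pos hdvd1
  linarith

end NotUnit

section Surj

variable {q : ℤ[X]} {t n : ℤ}

set_option maxHeartbeats 1000000 in
theorem eq_Jideal_of_cyclic (hq : q = X^2 - C t * X + C n) (p k : ℕ) (hp : p.Prime)
    (hk : 1 ≤ k) (I : Ideal (AdjoinRoot q))
    (hcyc : IsAddCyclic ((AdjoinRoot q) ⧸ I))
    (hcard : Nat.card ((AdjoinRoot q) ⧸ I) = p^k) :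
    ∃ lam : ℤ, 0 ≤ lam ∧ lam < (p:ℤ)^k ∧ ((p:ℤ)^k ∣ q.eval lam) ∧
      I = Jideal q (p^k) lam := by
  set R := AdjoinRoot q with hR
  have hpk0 : p^k ≠ 0 := pow_ne_zero _ hp.ne_zero
  have hfin : Finite (R ⧸ I) := Nat.finite_of_card_ne_zero (by rw [hcard]; exact hpk0)
  have hcast : ((p^k : ℕ) : R ⧸ I) = 0 := by
    have : Fintype (R ⧸ I) := Fintype.ofFinite _
    rw [← hcard, Nat.card_eq_fintype_card]
    exact Nat.cast_card_eq_zero (R ⧸ I)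
  have hone : ((p^k : ℕ)) • (1 : R ⧸ I) = 0 := by
    rw [nsmul_eq_mul, mul_one]; exact_mod_cast hcast
  -- the additive order of 1 is exactly p^k
  have hord : addOrderOf (1 : R ⧸ I) = p^k := by
    have hdvd1 : addOrderOf (1 : R ⧸ I) ∣ p^k := addOrderOf_dvd_of_nsmul_eq_zero hone
    obtain ⟨j, hj, hjeq⟩ := (Nat.dvd_prime_pow hp).mp hdvd1
    rcases eq_or_lt_of_le hj with heq | hlt
    · rw [hjeq, heq]
    · exfalso
      have hdvd2 : addOrderOf (1 : R ⧸ I) ∣ p^(k-1) := by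
        rw [hjeq]; exact pow_dvd_pow p (by omega)
      have hz : ((p^(k-1) : ℕ) : R ⧸ I) = 0 := by
        have := addOrderOf_dvd_iff_nsmul_eq_zero.mp hdvd2
        rw [nsmul_eq_mul, mul_one] at this
        exact_mod_cast this
      obtain ⟨g, hg⟩ := hcyc.exists_generator
      have hgord : addOrderOf g = p^k := by
        have h1 : AddSubgroup.zmultiples g = ⊤ := by
          rw [AddSubgroup.eq_top_iff']; exact hg
        have h2 : Nat.card (AddSubgroup.zmultiples g) = Nat.card (R ⧸ I) := by
          rw [h1]; exact AddSubgroup.card_top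
        rw [← Nat.card_zmultiples, h2, hcard]
      have hgz : (p^(k-1) : ℕ) • g = 0 := by
        rw [nsmul_eq_mul, hz, zero_mul]
      have hdd : p^k ∣ p^(k-1) := hgord ▸ addOrderOf_dvd_of_nsmul_eq_zero hgz
      have h3 := Nat.le_of_dvd (Nat.pow_pos hp.pos) hdd
      have h4 := Nat.pow_lt_pow_right hp.one_lt (by omega : k - 1 < k)
      omega
  -- 1 generates the quotient additively
  have htop : AddSubgroup.zmultiples (1 : R ⧸ I) = ⊤ := by
    apply AddSubgroup.eq_top_of_card_eq
    rw [Nat.card_zmultiples, hord, hcard]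
  obtain ⟨m, hm⟩ : ∃ m : ℤ, m • (1 : R ⧸ I) = Ideal.Quotient.mk I (AdjoinRoot.root q) := by
    have : Ideal.Quotient.mk I (AdjoinRoot.root q) ∈ AddSubgroup.zmultiples (1 : R ⧸ I) := by
      rw [htop]; trivial
    exact AddSubgroup.mem_zmultiples_iff.mp this
  set lam : ℤ := m % ((p:ℤ)^k) with hlam
  have hppos : (0:ℤ) < (p:ℤ)^k := pow_pos (by exact_mod_cast hp.pos) k
  have hbound1 : 0 ≤ lam := Int.emod_nonneg m hppos.ne'
  have hbound2 : lam < (p:ℤ)^k := Int.emod_lt_of_pos m hppos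
  -- intCast of multiples of p^k vanish in the quotient
  have hvanish : ∀ e : ℤ, (p:ℤ)^k ∣ e → ((e : ℤ) : R ⧸ I) = 0 := by
    rintro e ⟨d, rfl⟩
    push_cast
    rw [show (((p:ℕ) : R ⧸ I))^k = ((p^k : ℕ) : R ⧸ I) by push_cast; ring, hcast]
    ring
  have hmklam : ((lam : ℤ) : R ⧸ I) = ((m : ℤ) : R ⧸ I) := by
    have h1 : ((lam - m : ℤ) : R ⧸ I) = 0 := by
      apply hvanish
      exact ⟨-(m / ((p:ℤ)^k)), by rw [hlam, Int.emod_def]; ring⟩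
    have h2 : ((lam : ℤ) : R ⧸ I) - ((m : ℤ) : R ⧸ I) = 0 := by
      push_cast at h1 ⊢
      linear_combination h1
    exact sub_eq_zero.mp h2
  -- lam - root lies in I
  have hmkroot : Ideal.Quotient.mk I ((lam : R) - AdjoinRoot.root q) = 0 := by
    rw [map_sub, ← hm]
    have h1 : Ideal.Quotient.mk I ((lam : R)) = ((lam : ℤ) : R ⧸ I) := map_intCast _ lam
    have h2 : m • (1 : R ⧸ I) = ((m : ℤ) : R ⧸ I) := by
      rw [zsmul_eq_mul, mul_one]
    rw [h1, h2, hmklam]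
    ring
  have hrootI : (lam : R) - AdjoinRoot.root q ∈ I := by
    rwa [← Ideal.Quotient.eq_zero_iff_mem]
  have hpkI : ((p^k : ℕ) : R) ∈ I := by
    rw [← Ideal.Quotient.eq_zero_iff_mem]
    rw [map_natCast]
    exact hcast
  -- p^k divides the evaluation
  have hevalI : ((q.eval lam : ℤ) : R) ∈ I := by
    have hdvd : ((lam : R) - AdjoinRoot.root q) ∣ ((q.eval lam : ℤ) : R) := by
      have h1 := Polynomial.sub_dvd_eval_sub ((lam : ℤ) : R) (AdjoinRoot.root q)
        (q.map (Int.castRingHom R))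
      have h2 : (q.map (Int.castRingHom R)).eval ((lam : ℤ) : R) = ((q.eval lam : ℤ) : R) := by
        rw [Polynomial.eval_map]
        exact Polynomial.eval₂_at_apply (Int.castRingHom R) lam
      have h3 : (q.map (Int.castRingHom R)).eval (AdjoinRoot.root q) = 0 := by
        rw [Polynomial.eval_map]
        rw [show Int.castRingHom R = AdjoinRoot.of q from RingHom.ext_int _ _]
        exact AdjoinRoot.eval₂_root q
      rw [h2, h3, sub_zero] at h1
      exact h1
    obtain ⟨cc, hcc⟩ := hdvd
    rw [hcc]
    exact Ideal.mul_mem_right _ _ hrootI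
  have heval : (p:ℤ)^k ∣ q.eval lam := by
    have h0 : ((q.eval lam : ℤ) : R ⧸ I) = 0 := by
      rw [← map_intCast (Ideal.Quotient.mk I) (q.eval lam)]
      exact Ideal.Quotient.eq_zero_iff_mem.mpr hevalI
    have h1 : (q.eval lam) • (1 : R ⧸ I) = 0 := by
      rw [zsmul_eq_mul, mul_one]; exact h0
    have h2 : ((addOrderOf (1 : R ⧸ I) : ℤ)) ∣ q.eval lam :=
      addOrderOf_dvd_iff_zsmul_eq_zero.mpr h1
    rw [hord] at h2
    exact_mod_cast h2
  -- conclude I = J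
  have hdM : ((p^k : ℕ) : ℤ) ∣ q.eval lam := by exact_mod_cast heval
  have hle : Jideal q (p^k) lam ≤ I := by
    rw [Jideal, Ideal.span_le]
    rintro z (rfl | rfl)
    · exact hpkI
    · exact hrootI
  have hcards : Nat.card (R ⧸ Jideal q (p^k) lam) = Nat.card (R ⧸ I) := by
    rw [card_quot q (p^k) lam hdM hq, hcard]
  have hfinJ : Finite (R ⧸ Jideal q (p^k) lam) :=
    Nat.finite_of_card_ne_zero (by rw [card_quot q (p^k) lam hdM hq]; exact hpk0)
  have hsurj : Function.Surjective (Ideal.Quotient.factor hle) := by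
    intro z
    obtain ⟨y, rfl⟩ := Ideal.Quotient.mk_surjective z
    exact ⟨Ideal.Quotient.mk _ y, Ideal.Quotient.factor_mk hle y⟩
  have hbij : Function.Bijective (Ideal.Quotient.factor hle) :=
    (Nat.bijective_iff_surjective_and_card _).mpr ⟨hsurj, hcards⟩
  refine ⟨lam, hbound1, hbound2, heval, ?_⟩
  apply le_antisymm _ hle
  intro z hz
  have h1 : Ideal.Quotient.factor hle (Ideal.Quotient.mk _ z) = 0 := by
    rw [Ideal.Quotient.factor_mk]
    exact Ideal.Quotient.eq_zero_iff_mem.mpr hz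
  have h2 : Ideal.Quotient.mk (Jideal q (p^k) lam) z = 0 := by
    apply hbij.injective
    rw [h1, map_zero]
  exact Ideal.Quotient.eq_zero_iff_mem.mp h2

end Surj

section Main

variable {q : ℤ[X]} {t n : ℤ}

theorem span_eq_Jideal (p k : ℕ) (lam : ℤ) :
    Ideal.span {((p : AdjoinRoot q))^k,
      algebraMap ℤ (AdjoinRoot q) lam - AdjoinRoot.root q} = Jideal q (p^k) lam := by
  rw [Jideal]
  have h1 : ((p : AdjoinRoot q))^k = ((p^k : ℕ) : AdjoinRoot q) := by push_cast; ring
  have h2 : algebraMap ℤ (AdjoinRoot q) lam = (lam : AdjoinRoot q) := by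
    exact eq_intCast _ lam
  rw [h1, h2]

set_option maxHeartbeats 1000000 in
theorem bijOn_general (hq : q = X^2 - C t * X + C n) (p k : ℕ) (hp : p.Prime) (hk : 1 ≤ k)
    (hpt : (p:ℤ) ∣ t) (hpn : (p:ℤ)^2 ∣ n) :
    Set.BijOn
      (fun lam : ℤ =>
        Ideal.span {((p : AdjoinRoot q) ^ k),
          algebraMap ℤ (AdjoinRoot q) lam - AdjoinRoot.root q})
      {lam : ℤ | 0 ≤ lam ∧ lam < (p : ℤ) ^ k ∧
        ((p : ℤ) ^ k ∣ q.eval lam) ∧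
        ¬ ((p : ℤ) ^ (k + 1) ∣ q.eval lam)}
      {I : Ideal (AdjoinRoot q) |
        IsUnit (I : FractionalIdeal (nonZeroDivisors (AdjoinRoot q))
          (FractionRing (AdjoinRoot q))) ∧
        IsAddCyclic ((AdjoinRoot q) ⧸ I) ∧
        Nat.card ((AdjoinRoot q) ⧸ I) = p ^ k} := by
  have hpk0 : p^k ≠ 0 := pow_ne_zero _ hp.ne_zero
  refine ⟨?_, ?_, ?_⟩
  · -- MapsTo
    rintro lam ⟨h0, h1, h2, h3⟩
    obtain ⟨u, hu⟩ := h2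
    have hpu : ¬ (p:ℤ) ∣ u := by
      rintro ⟨v, rfl⟩
      exact h3 ⟨v, by rw [hu]; ring⟩
    have hcop : IsCoprime ((p:ℤ)^k) u := by
      apply IsCoprime.pow_left
      rw [Int.isCoprime_iff_nat_coprime]
      have : ((p:ℤ)).natAbs = p := Int.natAbs_natCast p
      rw [this]
      exact (Nat.Prime.coprime_iff_not_dvd hp).mpr (fun hdd => hpu (Int.natCast_dvd.mpr hdd))
    obtain ⟨a, b, hab⟩ := hcop
    have hd : ((p^k : ℕ) : ℤ) ∣ q.eval lam := by push_cast; exact ⟨u, hu⟩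
    have hbez : ∃ a b : ℤ, a * ((p^k : ℕ) : ℤ)^2 + b * q.eval lam = ((p^k : ℕ) : ℤ) := by
      refine ⟨a, b, ?_⟩
      have := congrArg (fun z => z * ((p:ℤ)^k)) hab
      push_cast
      rw [hu]
      linear_combination this
    simp only [Set.mem_setOf_eq, span_eq_Jideal]
    exact ⟨isUnit_Jideal hq (p^k) lam hd hbez hpk0,
      isAddCyclic_quot q (p^k) lam hd hq,
      card_quot q (p^k) lam hd hq⟩
  · -- InjOn
    rintro lam1 ⟨h10, h11, h12, h13⟩ lam2 ⟨h20, h21, h22, h23⟩ heq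
    simp only [span_eq_Jideal] at heq
    have hd1 : ((p^k : ℕ) : ℤ) ∣ q.eval lam1 := by push_cast; exact h12
    have hmem : (lam2 : AdjoinRoot q) - AdjoinRoot.root q ∈ Jideal q (p^k) lam1 := by
      rw [heq, Jideal]
      exact Ideal.subset_span (by simp)
    rw [← ker_psi q (p^k) lam1 hd1 hq, RingHom.mem_ker] at hmem
    rw [map_sub, psi_root] at hmem
    have hmem2 : ((lam2 - lam1 : ℤ) : ZMod (p^k)) = 0 := by
      push_cast
      rw [show (((lam2 : ℤ)) : ZMod (p^k)) = psi q (p^k) lam1 hd1 ((lam2 : ℤ) : AdjoinRoot q)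
        from (psi_intCast q (p^k) lam1 hd1 lam2).symm]
      linear_combination hmem
    have hdvd : ((p:ℤ))^k ∣ lam2 - lam1 := by
      have := (ZMod.intCast_zmod_eq_zero_iff_dvd _ _).mp hmem2
      exact_mod_cast this
    obtain ⟨s, hs⟩ := hdvd
    have hppos : (0:ℤ) < (p:ℤ)^k := pow_pos (by exact_mod_cast hp.pos) k
    have hs0 : s = 0 := by
      rcases lt_trichotomy s 0 with h | h | h
      · nlinarith
      · exact h
      · nlinarith
    rw [hs0, mul_zero] at hs
    omega
  · -- SurjOn
    rintro I ⟨hunit, hcyc, hcard⟩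
    obtain ⟨lam, hb1, hb2, heval, hIJ⟩ := eq_Jideal_of_cyclic hq p k hp hk I hcyc hcard
    refine ⟨lam, ⟨hb1, hb2, heval, ?_⟩, ?_⟩
    · rw [hIJ] at hunit
      exact not_dvd_succ_of_isUnit hq p k hp hk lam hpt hpn heval hunit
    · simp only [span_eq_Jideal]
      exact hIJ.symm

end Main

end QuadAux

/-- For `p ∣ c` prime and `k ≥ 1`, the map `λ ↦ (p^k, λ - α_𝒪)` is a
bijection between residues `λ` modulo `p^k` (represented by `0 ≤ λ < p^k`) with
`P_𝒪(λ) ≡ 0 mod p^k` but `P_𝒪(λ) ≢ 0 mod p^{k+1}`, and the invertible ideals `I` of `𝒪`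
with `𝒪/I` cyclic of order `p^k`. -/
theorem admissible_ideals_of_norm_p_pow_bijection
    (DK : ℤ) (hDK : DK < 0) (hfund : IsFundamentalDiscriminant DK)
    (c : ℕ) (hc : 0 < c) (p : ℕ) (hp : p.Prime) (hpc : p ∣ c) (k : ℕ) (hk : 1 ≤ k) :
    Set.BijOn
      (fun lam : ℤ =>
        Ideal.span {((p : QuadOrder DK c) ^ k),
          algebraMap ℤ (QuadOrder DK c) lam - AdjoinRoot.root (ordPoly DK c)})
      {lam : ℤ | 0 ≤ lam ∧ lam < (p : ℤ) ^ k ∧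
        ((p : ℤ) ^ k ∣ (ordPoly DK c).eval lam) ∧
        ¬ ((p : ℤ) ^ (k + 1) ∣ (ordPoly DK c).eval lam)}
      {I : Ideal (QuadOrder DK c) |
        IsUnit (I : FractionalIdeal (nonZeroDivisors (QuadOrder DK c))
          (FractionRing (QuadOrder DK c))) ∧
        IsAddCyclic ((QuadOrder DK c) ⧸ I) ∧
        Nat.card ((QuadOrder DK c) ⧸ I) = p ^ k} := by
  have hpc' : (p:ℤ) ∣ (c:ℤ) := Int.natCast_dvd_natCast.mpr hpc
  by_cases h4 : 4 ∣ DK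
  · have hq : ordPoly DK c = X^2 - C (0:ℤ) * X + C (-((c:ℤ)^2 * (DK/4))) := by
      rw [ordPoly, if_pos h4, map_neg]; rw [map_zero]; ring
    have hpn : (p:ℤ)^2 ∣ -((c:ℤ)^2 * (DK/4)) :=
      dvd_neg.mpr ((pow_dvd_pow_of_dvd hpc' 2).mul_right _)
    exact QuadAux.bijOn_general hq p k hp hk (dvd_zero _) hpn
  · have hq : ordPoly DK c = X^2 - C ((c:ℤ)) * X + C ((c:ℤ)^2 * ((1 - DK)/4)) := by
      rw [ordPoly, if_neg h4]
    have hpn : (p:ℤ)^2 ∣ (c:ℤ)^2 * ((1 - DK)/4) :=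
      (pow_dvd_pow_of_dvd hpc' 2).mul_right _
    exact QuadAux.bijOn_general hq p k hp hk hpc' hpn
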